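/- For every non-degenerate PCR G over a PCS Σ, there exists a poc set Ĝ and a surjective PCR morphism π : G → Ĝ such that every PCR morphism f from G to a poc set P factors uniquely as f = f̂ ∘ π for a PCR morphism f̂ : Ĝ → P. -/
import Mathlib


universe u v

structure PCS (α : Type*) where
  star : α → α
  zero : α
  star_star : ∀ a, star (star a) = a
  star_ne_self : ∀ a, star a ≠ a

variable {α : Type*}

/-- A pointed complemented relation (PCR) over the PCS `P`. -/
def IsPCR (P : PCS α) (G : Set (α × α)) : Prop :=
  (∀ a, (P.zero, a) ∈ G) ∧ ∀ a b, (a, b) ∈ G ↔ (P.star b, P.star a) ∈ G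

/-- `a ≤_G b`: the reflexive-transitive closure of the relation `G`. -/
def pcrLe (G : Set (α × α)) (a b : α) : Prop :=
  Relation.ReflTransGen (fun x y => (x, y) ∈ G) a b

/-- A set `S` is `G`-coherent if no `a, b ∈ S` satisfy `a ≤_G b*`. -/
def Coherent (P : PCS α) (G : Set (α × α)) (S : Set α) : Prop :=
  ∀ a ∈ S, ∀ b ∈ S, ¬ pcrLe G a (P.star b)

/-- Forward closure `↑S = {b | ∃ a ∈ S, a ≤_G b}`. -/
def upClosure (G : Set (α × α)) (S : Set α) : Set α :=
  {b | ∃ a ∈ S, pcrLe G a b}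

/-- Maximal `G`-coherent subsets; the members of the dual space `G°`. -/
def MaxCoherent (P : PCS α) (G : Set (α × α)) (S : Set α) : Prop :=
  Coherent P G S ∧ ∀ T, Coherent P G T → S ⊆ T → S = T

/-- `G` is non-degenerate: no `a` satisfies both `a ≤_G a*` and `a* ≤_G a`. -/
def Nondegenerate (P : PCS α) (G : Set (α × α)) : Prop :=
  ∀ a, ¬ (pcrLe G a (P.star a) ∧ pcrLe G (P.star a) a)

/-- A complete `*`-selection: exactly one of `a`, `a*` belongs to `S`, for each `a`. -/
def CompleteSel (P : PCS α) (S : Set α) : Prop :=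
  ∀ a, Xor' (a ∈ S) (P.star a ∈ S)

/-- The half-space `⟨S;G⟩ = {u ∈ G° : S ⊆ u}`. -/
def halfspace (P : PCS α) (G : Set (α × α)) (S : Set α) : Set (Set α) :=
  {u | MaxCoherent P G u ∧ S ⊆ u}

/-- Coherent projection `coh_G(T) = ↑T ∖ (↑T)*`. -/
def cohProj (P : PCS α) (G : Set (α × α)) (T : Set α) : Set α :=
  upClosure G T \ (P.star '' upClosure G T)

/-- Morphisms of PCRs. -/
def IsPCRHom {β : Type*} (P : PCS α) (Q : PCS β) (G : Set (α × α)) (H : Set (β × β))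
    (f : α → β) : Prop :=
  f P.zero = Q.zero ∧ (∀ a, f (P.star a) = Q.star (f a)) ∧
    ∀ a b, (a, b) ∈ G → pcrLe H (f a) (f b)

/-- A poc set: a PCR whose induced relation `≤_G` is antisymmetric and whose only
negligible element is `0`. -/
def IsPocSet (P : PCS α) (G : Set (α × α)) : Prop :=
  IsPCR P G ∧ (∀ a b, pcrLe G a b → pcrLe G b a → a = b) ∧
    ∀ a, pcrLe G a (P.star a) → a = P.zero
namespace Stmt4Aux

variable {α : Type u} (P : PCS α) (G : Set (α × α))

/-- `a` is negligible. -/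
def Neg (a : α) : Prop := pcrLe G a (P.star a)

theorem le_star (hG : IsPCR P G) {a b : α} (h : pcrLe G a b) :
    pcrLe G (P.star b) (P.star a) := by
  induction h with
  | refl => exact Relation.ReflTransGen.refl
  | tail _ hstep ih => exact Relation.ReflTransGen.head ((hG.2 _ _).mp hstep) ih

theorem zero_le (hG : IsPCR P G) (a : α) : pcrLe G P.zero a :=
  Relation.ReflTransGen.single (hG.1 a)

theorem le_zstar (hG : IsPCR P G) (a : α) : pcrLe G a (P.star P.zero) := by
  have h := le_star P G hG (zero_le P G hG (P.star a))
  rwa [P.star_star] at h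

theorem neg_zero (hG : IsPCR P G) : Neg P G P.zero := zero_le P G hG _

theorem neg_star_le {a : α} (h : Neg P G (P.star a)) : pcrLe G (P.star a) a := by
  have h' : pcrLe G (P.star a) (P.star (P.star a)) := h
  rwa [P.star_star] at h'

theorem neg_star_of_le {a : α} (h : pcrLe G (P.star a) a) : Neg P G (P.star a) := by
  show pcrLe G (P.star a) (P.star (P.star a))
  rwa [P.star_star]

theorem neg_of_negss {a : α} (h : Neg P G (P.star (P.star a))) : Neg P G a := by
  rwa [P.star_star] at h

theorem neg_elim (hnd : Nondegenerate P G) {a : α}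
    (h1 : Neg P G a) (h2 : Neg P G (P.star a)) : False :=
  hnd a ⟨h1, neg_star_le P G h2⟩

/-- The congruence identifying mutually `≤`-related elements, all negligible
elements, and all co-negligible elements. -/
def pocRel (a b : α) : Prop :=
  (pcrLe G a b ∧ pcrLe G b a) ∨ (Neg P G a ∧ Neg P G b) ∨
    (Neg P G (P.star a) ∧ Neg P G (P.star b))

theorem pocRel_refl (a : α) : pocRel P G a a :=
  Or.inl ⟨Relation.ReflTransGen.refl, Relation.ReflTransGen.refl⟩

theorem pocRel_symm {a b : α} (h : pocRel P G a b) : pocRel P G b a := by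
  rcases h with ⟨h1, h2⟩ | ⟨h1, h2⟩ | ⟨h1, h2⟩
  exacts [Or.inl ⟨h2, h1⟩, Or.inr (Or.inl ⟨h2, h1⟩), Or.inr (Or.inr ⟨h2, h1⟩)]

theorem pocRel_trans (hG : IsPCR P G) (hnd : Nondegenerate P G) {a b c : α}
    (hab : pocRel P G a b) (hbc : pocRel P G b c) : pocRel P G a c := by
  rcases hab with ⟨h1, h2⟩ | ⟨h1, h2⟩ | ⟨h1, h2⟩ <;>
    rcases hbc with ⟨g1, g2⟩ | ⟨g1, g2⟩ | ⟨g1, g2⟩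
  · exact Or.inl ⟨h1.trans g1, g2.trans h2⟩
  · exact Or.inr (Or.inl ⟨h1.trans (g1.trans (le_star P G hG h1)), g2⟩)
  · exact Or.inr (Or.inr ⟨neg_star_of_le P G
      ((le_star P G hG h2).trans ((neg_star_le P G g1).trans h2)), g2⟩)
  · exact Or.inr (Or.inl ⟨h1, g2.trans (h2.trans (le_star P G hG g2))⟩)
  · exact Or.inr (Or.inl ⟨h1, g2⟩)
  · exact (neg_elim P G hnd h2 g1).elim
  · exact Or.inr (Or.inr ⟨h1, neg_star_of_le P G
      ((le_star P G hG g1).trans ((neg_star_le P G h2).trans g1))⟩)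
  · exact (neg_elim P G hnd g1 h2).elim
  · exact Or.inr (Or.inr ⟨h1, g2⟩)

theorem pocRel_star (hG : IsPCR P G) {a b : α} (h : pocRel P G a b) :
    pocRel P G (P.star a) (P.star b) := by
  rcases h with ⟨h1, h2⟩ | ⟨h1, h2⟩ | ⟨h1, h2⟩
  · exact Or.inl ⟨le_star P G hG h2, le_star P G hG h1⟩
  · exact Or.inr (Or.inr ⟨by rw [P.star_star]; exact h1, by rw [P.star_star]; exact h2⟩)
  · exact Or.inr (Or.inl ⟨h1, h2⟩)

def pocSetoid (hG : IsPCR P G) (hnd : Nondegenerate P G) : Setoid α :=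
  ⟨pocRel P G, ⟨pocRel_refl P G, pocRel_symm P G, pocRel_trans P G hG hnd⟩⟩

variable (hG : IsPCR P G) (hnd : Nondegenerate P G)

def pocQuot : Type u := Quotient (pocSetoid P G hG hnd)

def mk (a : α) : pocQuot P G hG hnd := Quotient.mk (pocSetoid P G hG hnd) a

theorem mk_eq {a b : α} (h : pocRel P G a b) : mk P G hG hnd a = mk P G hG hnd b :=
  Quotient.sound h

theorem mk_exact {a b : α} (h : mk P G hG hnd a = mk P G hG hnd b) : pocRel P G a b :=
  Quotient.exact h

def pocPCS : PCS (pocQuot P G hG hnd) where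
  star := Quotient.map P.star (fun _ _ h => pocRel_star P G hG h)
  zero := mk P G hG hnd P.zero
  star_star := by
    intro x
    induction x using Quotient.ind with
    | _ a =>
      show mk P G hG hnd (P.star (P.star a)) = mk P G hG hnd a
      rw [P.star_star]
  star_ne_self := by
    intro x
    induction x using Quotient.ind with
    | _ a =>
      intro h
      have hr : pocRel P G (P.star a) a := mk_exact P G hG hnd h
      rcases hr with ⟨h1, h2⟩ | ⟨h1, h2⟩ | ⟨h1, h2⟩
      · exact hnd a ⟨h2, h1⟩
      · exact neg_elim P G hnd h2 h1
      · exact neg_elim P G hnd (neg_of_negss P G h1) h2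

theorem star_mk (a : α) :
    (pocPCS P G hG hnd).star (mk P G hG hnd a) = mk P G hG hnd (P.star a) := rfl

def pocH : Set (pocQuot P G hG hnd × pocQuot P G hG hnd) :=
  {p | ∃ a b, mk P G hG hnd a = p.1 ∧ mk P G hG hnd b = p.2 ∧ pcrLe G a b}

theorem pocH_refl (x : pocQuot P G hG hnd) : (x, x) ∈ pocH P G hG hnd := by
  induction x using Quotient.ind with
  | _ a => exact ⟨a, a, rfl, rfl, Relation.ReflTransGen.refl⟩

theorem pocH_trans {x y z : pocQuot P G hG hnd} (h1 : (x, y) ∈ pocH P G hG hnd)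
    (h2 : (y, z) ∈ pocH P G hG hnd) : (x, z) ∈ pocH P G hG hnd := by
  obtain ⟨a, b, hax, hby, hab⟩ := h1
  obtain ⟨b', c, hb', hcz, hbc⟩ := h2
  subst hax; subst hcz
  have hr : pocRel P G b b' := mk_exact P G hG hnd (hby.trans hb'.symm)
  rcases hr with ⟨u1, u2⟩ | ⟨u1, u2⟩ | ⟨u1, u2⟩
  · exact ⟨a, c, rfl, rfl, hab.trans (u1.trans hbc)⟩
  · have hNa : Neg P G a := hab.trans (u1.trans (le_star P G hG hab))
    refine ⟨P.zero, c, ?_, rfl, zero_le P G hG c⟩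
    exact (mk_eq P G hG hnd (Or.inr (Or.inl ⟨hNa, neg_zero P G hG⟩))).symm
  · have hNc : Neg P G (P.star c) := neg_star_of_le P G
      ((le_star P G hG hbc).trans ((neg_star_le P G u2).trans hbc))
    refine ⟨a, P.star P.zero, rfl, ?_, le_zstar P G hG a⟩
    exact mk_eq P G hG hnd (Or.inr (Or.inr
      ⟨by rw [P.star_star]; exact neg_zero P G hG, hNc⟩))

theorem pcrLe_pocH {x y : pocQuot P G hG hnd} :
    pcrLe (pocH P G hG hnd) x y ↔ (x, y) ∈ pocH P G hG hnd := by
  constructor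
  · intro h
    induction h with
    | refl => exact pocH_refl P G hG hnd x
    | tail _ hstep ih => exact pocH_trans P G hG hnd ih hstep
  · exact fun h => Relation.ReflTransGen.single h

theorem pocH_star {x y : pocQuot P G hG hnd} (h : (x, y) ∈ pocH P G hG hnd) :
    ((pocPCS P G hG hnd).star y, (pocPCS P G hG hnd).star x) ∈ pocH P G hG hnd := by
  obtain ⟨a, b, hax, hby, hab⟩ := h
  subst hax; subst hby
  exact ⟨P.star b, P.star a, rfl, rfl, le_star P G hG hab⟩

theorem pocH_antisymm {x y : pocQuot P G hG hnd} (h1 : (x, y) ∈ pocH P G hG hnd)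
    (h2 : (y, x) ∈ pocH P G hG hnd) : x = y := by
  obtain ⟨a, b, hax, hby, hab⟩ := h1
  obtain ⟨b', a', hb', ha', hba⟩ := h2
  subst hax; subst hby
  have rb : pocRel P G b b' := mk_exact P G hG hnd hb'.symm
  have ra : pocRel P G a' a := mk_exact P G hG hnd ha'
  refine mk_eq P G hG hnd ?_
  rcases rb with ⟨u1, u2⟩ | ⟨u1, u2⟩ | ⟨u1, u2⟩
  · rcases ra with ⟨v1, v2⟩ | ⟨v1, v2⟩ | ⟨v1, v2⟩
    · exact Or.inl ⟨hab, (u1.trans hba).trans v1⟩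
    · have hb2 : pcrLe G b a' := u1.trans hba
      exact Or.inr (Or.inl ⟨v2, hb2.trans (v1.trans (le_star P G hG hb2))⟩)
    · exact Or.inr (Or.inr ⟨v2, neg_star_of_le P G
        ((le_star P G hG hab).trans ((neg_star_le P G v2).trans hab))⟩)
  · exact Or.inr (Or.inl ⟨hab.trans (u1.trans (le_star P G hG hab)), u1⟩)
  · rcases ra with ⟨v1, v2⟩ | ⟨v1, v2⟩ | ⟨v1, v2⟩
    · exact Or.inr (Or.inr ⟨neg_star_of_le P G
        (((le_star P G hG v1).trans (le_star P G hG hba)).trans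
          ((neg_star_le P G u2).trans (hba.trans v1))), u1⟩)
    · exact (neg_elim P G hnd (hba.trans (v1.trans (le_star P G hG hba))) u2).elim
    · exact Or.inr (Or.inr ⟨v2, u1⟩)

theorem pocH_neg {x : pocQuot P G hG hnd}
    (h : (x, (pocPCS P G hG hnd).star x) ∈ pocH P G hG hnd) :
    x = (pocPCS P G hG hnd).zero := by
  induction x using Quotient.ind with
  | _ a =>
    obtain ⟨a', b', ha', hb', hle⟩ := h
    have ra : pocRel P G a' a := mk_exact P G hG hnd ha'
    have rb : pocRel P G b' (P.star a) := mk_exact P G hG hnd hb'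
    refine mk_eq P G hG hnd (Or.inr (Or.inl ⟨?_, neg_zero P G hG⟩))
    rcases ra with ⟨v1, v2⟩ | ⟨v1, v2⟩ | ⟨v1, v2⟩
    · rcases rb with ⟨w1, w2⟩ | ⟨w1, w2⟩ | ⟨w1, w2⟩
      · exact v2.trans (hle.trans w1)
      · exact v2.trans (hle.trans (w1.trans ((le_star P G hG hle).trans
          (le_star P G hG v2))))
      · exact neg_of_negss P G w2
    · exact v2
    · rcases rb with ⟨w1, w2⟩ | ⟨w1, w2⟩ | ⟨w1, w2⟩
      · have h1 : pcrLe G a (P.star a') := by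
          have := le_star P G hG (hle.trans w1)
          rwa [P.star_star] at this
        exact h1.trans ((neg_star_le P G v1).trans (hle.trans w1))
      · exact (neg_elim P G hnd w1 (neg_star_of_le P G
          ((le_star P G hG hle).trans ((neg_star_le P G v1).trans hle)))).elim
      · exact neg_of_negss P G w2

theorem hom_le {γ : Type v} {R : PCS γ} {K : Set (γ × γ)} {f : α → γ}
    (hf : IsPCRHom P R G K f) {a b : α} (h : pcrLe G a b) : pcrLe K (f a) (f b) := by
  induction h with
  | refl => exact Relation.ReflTransGen.refl
  | tail _ hstep ih => exact ih.trans (hf.2.2 _ _ hstep)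

theorem hom_const {γ : Type v} {R : PCS γ} {K : Set (γ × γ)} (hK : IsPocSet R K)
    {f : α → γ} (hf : IsPCRHom P R G K f) {a b : α} (h : pocRel P G a b) :
    f a = f b := by
  rcases h with ⟨h1, h2⟩ | ⟨h1, h2⟩ | ⟨h1, h2⟩
  · exact hK.2.1 _ _ (hom_le P G hf h1) (hom_le P G hf h2)
  · have e1 : f a = R.zero := hK.2.2 _ (by
      have := hom_le P G hf h1; rwa [hf.2.1] at this)
    have e2 : f b = R.zero := hK.2.2 _ (by
      have := hom_le P G hf h2; rwa [hf.2.1] at this)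
    rw [e1, e2]
  · have e1 : f (P.star a) = R.zero := hK.2.2 _ (by
      have := hom_le P G hf h1; rwa [hf.2.1 (P.star a)] at this)
    have e2 : f (P.star b) = R.zero := hK.2.2 _ (by
      have := hom_le P G hf h2; rwa [hf.2.1 (P.star b)] at this)
    have : R.star (f a) = R.star (f b) := by
      rw [← hf.2.1, ← hf.2.1, e1, e2]
    calc f a = R.star (R.star (f a)) := (R.star_star _).symm
      _ = R.star (R.star (f b)) := by rw [this]
      _ = f b := R.star_star _

end Stmt4Aux

/-- Existence of the canonical poc set quotient with its universal property. -/
theorem stmt4 {α : Type u} (P : PCS α) (G : Set (α × α)) (hG : IsPCR P G)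
    (hnd : Nondegenerate P G) :
    ∃ (β : Type u) (Q : PCS β) (H : Set (β × β)) (π : α → β),
      IsPocSet Q H ∧ Function.Surjective π ∧ IsPCRHom P Q G H π ∧
      ∀ (γ : Type u) (R : PCS γ) (K : Set (γ × γ)), IsPocSet R K →
        ∀ f : α → γ, IsPCRHom P R G K f →
          ∃! g : β → γ, IsPCRHom Q R H K g ∧ f = g ∘ π := by
  refine ⟨Stmt4Aux.pocQuot P G hG hnd, Stmt4Aux.pocPCS P G hG hnd,
    Stmt4Aux.pocH P G hG hnd, Stmt4Aux.mk P G hG hnd,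
    ⟨⟨?_, ?_⟩, ?_, ?_⟩, ?_, ⟨rfl, fun _ => rfl, ?_⟩, ?_⟩
  · -- zero axiom
    intro x
    induction x using Quotient.ind with
    | _ a => exact ⟨P.zero, a, rfl, rfl, Stmt4Aux.zero_le P G hG a⟩
  · -- star duality
    intro x y
    constructor
    · exact Stmt4Aux.pocH_star P G hG hnd
    · intro h
      have h2 := Stmt4Aux.pocH_star P G hG hnd h
      rwa [(Stmt4Aux.pocPCS P G hG hnd).star_star,
        (Stmt4Aux.pocPCS P G hG hnd).star_star] at h2
  · -- antisymmetry
    intro x y h1 h2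
    exact Stmt4Aux.pocH_antisymm P G hG hnd
      ((Stmt4Aux.pcrLe_pocH P G hG hnd).mp h1)
      ((Stmt4Aux.pcrLe_pocH P G hG hnd).mp h2)
  · -- negligibility
    intro x h
    exact Stmt4Aux.pocH_neg P G hG hnd ((Stmt4Aux.pcrLe_pocH P G hG hnd).mp h)
  · -- surjectivity
    intro x
    induction x using Quotient.ind with
    | _ a => exact ⟨a, rfl⟩
  · -- π maps G into ≤_H
    intro a b hab
    exact Relation.ReflTransGen.single
      ⟨a, b, rfl, rfl, Relation.ReflTransGen.single hab⟩
  · -- universal property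
    intro γ R K hK f hf
    refine ⟨Quotient.lift f (fun a b h => Stmt4Aux.hom_const P G hK hf h),
      ⟨⟨hf.1, ?_, ?_⟩, rfl⟩, ?_⟩
    · intro x
      induction x using Quotient.ind with
      | _ a => exact hf.2.1 a
    · intro x y h
      obtain ⟨a, b, hax, hby, hab⟩ := h
      subst hax; subst hby
      exact Stmt4Aux.hom_le P G hf hab
    · intro g' hg'
      funext x
      induction x using Quotient.ind with
      | _ a => exact (congrFun hg'.2 a).symm
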